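/- Let D be an integral domain, T a flat D-algebra, and ℓ a length function on T. Then the map ℓ^D sending a D-module M to ℓ(T ⊗_D M) is a length function on D. -/

import Mathlib

open scoped ENNReal

universe u

structure LengthFunction (R : Type u) [CommRing R] where
  toFun : ∀ (M : Type u) [AddCommGroup M] [Module R M], ℝ≥0∞
  zero' : ∀ (M : Type u) [AddCommGroup M] [Module R M], Subsingleton M → toFun M = 0
  additive : ∀ (M₁ M₂ M₃ : Type u) [AddCommGroup M₁] [Module R M₁]
      [AddCommGroup M₂] [Module R M₂] [AddCommGroup M₃] [Module R M₃]
      (f : M₁ →ₗ[R] M₂) (g : M₂ →ₗ[R] M₃),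
      Function.Injective f → Function.Surjective g →
      LinearMap.range f = LinearMap.ker g →
      toFun M₂ = toFun M₁ + toFun M₃
  upperContinuous : ∀ (M : Type u) [AddCommGroup M] [Module R M],
      toFun M = ⨆ (N : Submodule R M) (_ : N.FG), toFun N

/-- A length function is invariant under isomorphism. -/
theorem LengthFunction.congr {R : Type u} [CommRing R] (ℓ : LengthFunction R)
    {M₁ M₂ : Type u} [AddCommGroup M₁] [Module R M₁] [AddCommGroup M₂] [Module R M₂]
    (e : M₁ ≃ₗ[R] M₂) : ℓ.toFun M₁ = ℓ.toFun M₂ := by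
  have h := ℓ.additive PUnit M₁ M₂ 0 e.toLinearMap
    (Function.injective_of_subsingleton _) e.surjective ?_
  · rw [h, ℓ.zero' PUnit inferInstance, zero_add]
  · rw [LinearMap.range_zero, LinearMap.ker_eq_bot.mpr e.injective]

/-- A length function is monotone on submodules. -/
theorem LengthFunction.le_of_submodule {R : Type u} [CommRing R] (ℓ : LengthFunction R)
    {M : Type u} [AddCommGroup M] [Module R M] (P : Submodule R M) :
    ℓ.toFun P ≤ ℓ.toFun M := by
  have h := ℓ.additive P M (M ⧸ P) P.subtype P.mkQ P.injective_subtype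
    P.mkQ_surjective (by rw [Submodule.range_subtype, Submodule.ker_mkQ])
  rw [h]
  exact le_self_add

open TensorProduct in
theorem length_tensor {D : Type u} [CommRing D] [IsDomain D]
    (T : Type u) [CommRing T] [Algebra D T] [Module.Flat D T] (ℓ : LengthFunction T) :
    ∃ ℓD : LengthFunction D,
      ∀ (M : Type u) [AddCommGroup M] [Module D M],
        ℓD.toFun M = ℓ.toFun (T ⊗[D] M) := by
  refine ⟨⟨fun M _ _ => ℓ.toFun (T ⊗[D] M), ?_, ?_, ?_⟩, fun M _ _ => rfl⟩
  · -- zero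
    intro M _ _ hM
    refine ℓ.zero' _ ⟨fun a b => ?_⟩
    have key : ∀ x : T ⊗[D] M, x = 0 := by
      intro x
      induction x with
      | zero => rfl
      | tmul t m => rw [Subsingleton.elim m 0, tmul_zero]
      | add x y hx hy => rw [hx, hy, add_zero]
    rw [key a, key b]
  · -- additive
    intro M₁ M₂ M₃ _ _ _ _ _ _ f g hf hg hfg
    have hexact : Function.Exact (f.lTensor T) (g.lTensor T) :=
      Module.Flat.lTensor_exact T (LinearMap.exact_iff.mpr hfg.symm)
    refine ℓ.additive _ _ _ (f.baseChange T) (g.baseChange T) ?_ ?_ ?_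
    · show Function.Injective (f.baseChange T : T ⊗[D] M₁ → T ⊗[D] M₂)
      rw [LinearMap.baseChange_eq_ltensor]
      exact Module.Flat.lTensor_preserves_injective_linearMap f hf
    · show Function.Surjective (g.baseChange T : T ⊗[D] M₂ → T ⊗[D] M₃)
      rw [LinearMap.baseChange_eq_ltensor]
      exact LinearMap.lTensor_surjective T hg
    · ext x
      rw [LinearMap.mem_ker, LinearMap.mem_range]
      have := hexact x
      simp only [LinearMap.baseChange_eq_ltensor] at *
      exact this.symm
  · -- upper continuity
    intro M _ _
    show ℓ.toFun (T ⊗[D] M) = ⨆ (N : Submodule D M) (_ : N.FG), ℓ.toFun (T ⊗[D] ↥N)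
    apply le_antisymm
    · rw [ℓ.upperContinuous (T ⊗[D] M)]
      refine iSup₂_le fun P hP => ?_
      obtain ⟨s, hs⟩ := hP
      obtain ⟨N, hNfin, hsub⟩ :=
        TensorProduct.exists_finite_submodule_right_of_setFinite (s : Set (T ⊗[D] M)) s.finite_toSet
      have hNfg : N.FG := Module.Finite.iff_fg.mp hNfin
      set E : T ⊗[D] ↥N →ₗ[T] T ⊗[D] M := N.subtype.baseChange T with hE
      have hEinj : Function.Injective E := by
        rw [hE]
        show Function.Injective (N.subtype.baseChange T : T ⊗[D] ↥N → T ⊗[D] M)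
        rw [LinearMap.baseChange_eq_ltensor]
        exact Module.Flat.lTensor_preserves_injective_linearMap _ N.injective_subtype
      have hPle : P ≤ LinearMap.range E := by
        rw [← hs, Submodule.span_le]
        intro x hx
        obtain ⟨y, hy⟩ := hsub hx
        exact ⟨y, by rw [hE, ← hy]; exact congrFun (LinearMap.baseChange_eq_ltensor N.subtype) y⟩
      -- transfer P along E
      have hmap : Submodule.map E (Submodule.comap E P) = P :=
        Submodule.map_comap_eq_self hPle
      have e1 : (Submodule.comap E P) ≃ₗ[T] Submodule.map E (Submodule.comap E P) :=
        Submodule.equivMapOfInjective E hEinj _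
      have h1 : ℓ.toFun P ≤ ℓ.toFun (T ⊗[D] ↥N) := by
        calc ℓ.toFun P = ℓ.toFun (Submodule.map E (Submodule.comap E P)) := by rw [hmap]
          _ = ℓ.toFun (Submodule.comap E P) := (ℓ.congr e1).symm
          _ ≤ ℓ.toFun (T ⊗[D] ↥N) := ℓ.le_of_submodule _
      exact h1.trans (le_iSup₂ (f := fun (N : Submodule D M) (_ : N.FG) => ℓ.toFun (T ⊗[D] ↥N)) N hNfg)
    · refine iSup₂_le fun N hN => ?_
      have hEinj : Function.Injective (N.subtype.baseChange T : T ⊗[D] ↥N → T ⊗[D] M) := by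
        rw [LinearMap.baseChange_eq_ltensor]
        exact Module.Flat.lTensor_preserves_injective_linearMap _ N.injective_subtype
      calc ℓ.toFun (T ⊗[D] ↥N)
          = ℓ.toFun (LinearMap.range (N.subtype.baseChange T)) :=
            ℓ.congr (LinearEquiv.ofInjective _ hEinj)
        _ ≤ ℓ.toFun (T ⊗[D] M) := ℓ.le_of_submodule _
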